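/- Let K/F be a finite Galois field extension with norm N_{K/F}, σ ∈ Gal(K/F) of order n with Fix(σ) = F, and suppose σ commutes with every τ ∈ Gal(K/F). Let n ≥ m−1 and f(t) = t^m − a_0 ∈ K[t;σ] with a_0 ∈ K∖F. Then H is an F-algebra automorphism of S_f if and only if H = H_{τ,k} for some τ ∈ Gal(K/F) and k ∈ K^× with τ(a_0) = (∏_{l=0}^{m−1} σ^l(k))·a_0; for any such k, N_{K/F}(k) is an m-th root of unity. -/
import Mathlib


/-! ## The Petit algebra `S_f = K[t;σ]/K[t;σ]f`

For a twisted polynomial ring `R = K[t;σ]` (multiplication determined by `t·a = σ(a)·t`)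
and the monic skew polynomial `f(t) = t^m - Σ_{i<m} a_i t^i` (encoded by its coefficient
vector `a : Fin m → K`), the Petit algebra `S_f` is realised on coefficient vectors
`Fin m → K` (the polynomials of degree `< m`), with multiplication `g ∘ h = (gh) mod_r f`. -/

/-- The remainder of `t^s` after right division by `f(t) = t^m - Σ_{i<m} a_i t^i`:
for `s < m` it is `t^s` itself, and for `s ≥ m` one uses
`t^s ≡ Σ_i σ^{s-m}(a_i) t^{s-m+i} (mod R·f)`. -/
noncomputable def tred {K : Type*} [Field K] (σ : K → K) (m : ℕ) (a : Fin m → K) (s : ℕ) :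
    Fin m → K :=
  if _h : s < m then (fun i => if (i : ℕ) = s then (1 : K) else 0)
  else ∑ i : Fin m, σ^[s - m] (a i) • tred σ m a (s - m + (i : ℕ))
termination_by s
decreasing_by
  have hi := i.isLt
  omega

/-- The multiplication `g ∘ h = (gh) mod_r f` of the Petit algebra `S_f`. -/
noncomputable def pmul {K : Type*} [Field K] (σ : K → K) {m : ℕ} (a : Fin m → K)
    (x y : Fin m → K) : Fin m → K :=
  ∑ i : Fin m, ∑ j : Fin m, (x i * σ^[(i : ℕ)] (y j)) • tred σ m a ((i : ℕ) + (j : ℕ))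

/-- The unit element `1` of `S_f`. -/
noncomputable def pone (K : Type*) [Field K] (m : ℕ) : Fin m → K :=
  fun i => if (i : ℕ) = 0 then 1 else 0

/-- The element `t` of `S_f`. -/
noncomputable def tvec (K : Type*) [Field K] (m : ℕ) : Fin m → K :=
  fun i => if (i : ℕ) = 1 then 1 else 0

/-- The canonical copy of `c ∈ K` inside `S_f`. -/
noncomputable def iota (K : Type*) [Field K] (m : ℕ) (c : K) : Fin m → K :=
  fun i => if (i : ℕ) = 0 then c else 0

/-- `S_f` is associative; by Petit's theorem this holds if and only if `f` is
invariant (i.e. `R·f` is a two-sided ideal of `R = K[t;σ]`). -/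
def PAssoc {K : Type*} [Field K] (σ : K → K) {m : ℕ} (a : Fin m → K) : Prop :=
  ∀ x y z : Fin m → K, pmul σ a (pmul σ a x y) z = pmul σ a x (pmul σ a y z)

/-- `H` is an automorphism of the algebra `S_f` over `F = Fix(σ)`: an `F`-linear
bijection preserving the multiplication and the unit. -/
structure IsPetitAut {K : Type*} [Field K] (σ : K → K) {m : ℕ} (a : Fin m → K)
    (H : (Fin m → K) → (Fin m → K)) : Prop where
  bijective : Function.Bijective H
  map_add : ∀ x y, H (x + y) = H x + H y
  map_smul : ∀ c : K, σ c = c → ∀ x, H (c • x) = c • H x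
  map_mul : ∀ x y, H (pmul σ a x y) = pmul σ a (H x) (H y)
  map_one : H (pone K m) = pone K m

/-- `H` is an inner automorphism `x ↦ (c_l ∘ x) ∘ c` of `S_f`, where `c_l` is a
left inverse of `c`. -/
def IsInnerPetit {K : Type*} [Field K] (σ : K → K) {m : ℕ} (a : Fin m → K)
    (H : (Fin m → K) → (Fin m → K)) : Prop :=
  ∃ c cl : Fin m → K, pmul σ a cl c = pone K m ∧
    ∀ x, H x = pmul σ a (pmul σ a cl x) c

/-- The map `H_{τ,k} : Σ x_i t^i ↦ τ(x_0) + Σ_{i≥1} τ(x_i)·(Π_{l<i} σ^l(k))·t^i`. -/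
noncomputable def Hmap {K : Type*} [Field K] (σ τ : K → K) {m : ℕ} (k : K)
    (x : Fin m → K) : Fin m → K :=
  fun i => τ (x i) * ∏ l ∈ Finset.range (i : ℕ), σ^[l] k

noncomputable def bvec (K : Type*) [Field K] (m s : ℕ) : Fin m → K :=
  fun i => if (i : ℕ) = s then 1 else 0

section aux
variable {F K : Type*} [Field F] [Field K] [Algebra F K]

lemma iterpow (σ : K ≃ₐ[F] K) (i : ℕ) (x : K) : (⇑σ)^[i] x = (σ ^ i) x := by
  induction i generalizing x with
  | zero => simp
  | succ n ih => rw [Function.iterate_succ_apply, ih, pow_succ, AlgEquiv.mul_apply]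

lemma tred_lt {σ : K → K} {m : ℕ} {a : Fin m → K} {s : ℕ} (h : s < m) :
    tred σ m a s = bvec K m s := by
  rw [tred, dif_pos h]; rfl

lemma tred_ge (σ : K ≃ₐ[F] K) {m : ℕ} (a0 : K) {s : ℕ} (hm : 0 < m) (hs1 : m ≤ s)
    (hs2 : s < 2 * m) :
    tred ⇑σ m (fun i : Fin m => if (i : ℕ) = 0 then a0 else 0) s
      = (⇑σ)^[s - m] a0 • bvec K m (s - m) := by
  rw [tred, dif_neg (by omega)]
  rw [Fintype.sum_eq_single (⟨0, hm⟩ : Fin m)]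
  · simp only [Fin.val_mk, if_pos rfl, Nat.add_zero]
    rw [tred_lt (by omega)]
    simp
  · intro b hb
    have hb' : (b : ℕ) ≠ 0 := fun h => hb (Fin.ext h)
    simp [hb', iterate_map_zero]

lemma iota_eq (m : ℕ) (c : K) : iota K m c = c • bvec K m 0 := by
  funext i; simp [iota, bvec, mul_ite]

lemma bvec_expand {m : ℕ} (x : Fin m → K) : ∑ j : Fin m, x j • bvec K m (j : ℕ) = x := by
  funext r
  rw [Finset.sum_apply]
  rw [Fintype.sum_eq_single r]
  · simp [bvec]
  · intro b hb
    have hb' : (r : ℕ) ≠ (b : ℕ) := fun h => hb (Fin.ext h.symm)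
    simp [bvec, hb']

lemma smul_pmul (σ : K → K) {m : ℕ} (a : Fin m → K) (b : K) (x y : Fin m → K) :
    pmul σ a (b • x) y = b • pmul σ a x y := by
  unfold pmul
  rw [Finset.smul_sum]
  refine Finset.sum_congr rfl fun i _ => ?_
  rw [Finset.smul_sum]
  refine Finset.sum_congr rfl fun j _ => ?_
  simp [smul_smul, mul_assoc]

lemma pmul_single (σ : K ≃ₐ[F] K) {m : ℕ} (a : Fin m → K) (b c : K) (i j : Fin m) :
    pmul ⇑σ a (b • bvec K m (i : ℕ)) (c • bvec K m (j : ℕ))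
      = (b * (⇑σ)^[(i : ℕ)] c) • tred ⇑σ m a ((i : ℕ) + (j : ℕ)) := by
  unfold pmul
  rw [Fintype.sum_eq_single i]
  · rw [Fintype.sum_eq_single j]
    · simp [bvec, smul_smul]
    · intro b' hb'
      have : (b' : ℕ) ≠ (j : ℕ) := fun h => hb' (Fin.ext h)
      simp [bvec, this, iterate_map_zero]
  · intro b' hb'
    have : (b' : ℕ) ≠ (i : ℕ) := fun h => hb' (Fin.ext h)
    simp [bvec, this]

lemma iota_pmul (σ : K ≃ₐ[F] K) {m : ℕ} (a : Fin m → K) (hm : 0 < m) (c : K) (y : Fin m → K) :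
    pmul ⇑σ a (iota K m c) y = c • y := by
  unfold pmul
  rw [Fintype.sum_eq_single (⟨0, hm⟩ : Fin m)]
  · simp only [Fin.val_mk, Function.iterate_zero, id_eq, Nat.zero_add, iota, if_pos rfl]
    calc ∑ j : Fin m, (c * y j) • tred ⇑σ m a (j : ℕ)
        = c • ∑ j : Fin m, y j • bvec K m (j : ℕ) := by
          rw [Finset.smul_sum]
          exact Finset.sum_congr rfl fun j _ => by rw [tred_lt j.isLt, smul_smul]
      _ = c • y := by rw [bvec_expand]
  · intro b hb
    have hb' : (b : ℕ) ≠ 0 := fun h => hb (Fin.ext h)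
    simp [iota, hb']

lemma pmul_iota_coord (σ : K ≃ₐ[F] K) {m : ℕ} (a : Fin m → K) (c : K) (x : Fin m → K)
    (r : Fin m) :
    pmul ⇑σ a x (iota K m c) r = x r * (⇑σ)^[(r : ℕ)] c := by
  unfold pmul
  rw [Finset.sum_apply]
  rw [Fintype.sum_eq_single r]
  · rw [Finset.sum_apply, Fintype.sum_eq_single (⟨0, r.pos⟩ : Fin m)]
    · simp only [Fin.val_mk, Nat.add_zero, iota, if_pos rfl]
      rw [tred_lt r.isLt]
      simp [bvec]
    · intro b hb
      have hb' : (b : ℕ) ≠ 0 := fun h => hb (Fin.ext h)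
      simp [iota, hb', iterate_map_zero]
  · intro b hb
    rw [Finset.sum_apply, Fintype.sum_eq_single (⟨0, b.pos⟩ : Fin m)]
    · have hb' : (r : ℕ) ≠ (b : ℕ) := fun h => hb (Fin.ext h.symm)
      simp only [Fin.val_mk, Nat.add_zero, iota, if_pos rfl]
      rw [tred_lt b.isLt]
      simp [bvec, hb']
    · intro b' hb'
      have : (b' : ℕ) ≠ 0 := fun h => hb' (Fin.ext h)
      simp [iota, this, iterate_map_zero]


noncomputable def acoef (K : Type*) [Field K] (m : ℕ) (a0 : K) : Fin m → K :=
  fun i => if (i : ℕ) = 0 then a0 else 0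

lemma tred_ge' (σ : K ≃ₐ[F] K) {m : ℕ} (a0 : K) {s : ℕ} (hm : 0 < m) (hs1 : m ≤ s)
    (hs2 : s < 2 * m) :
    tred ⇑σ m (acoef K m a0) s = (⇑σ)^[s - m] a0 • bvec K m (s - m) :=
  tred_ge σ a0 hm hs1 hs2

lemma pmul_tvec_coord (σ : K ≃ₐ[F] K) {m : ℕ} (a0 : K) (hm : 2 ≤ m) (x : Fin m → K)
    (r : Fin m) :
    pmul ⇑σ (acoef K m a0) x (tvec K m) r
      = if (r : ℕ) = 0 then x ⟨m - 1, by omega⟩ * a0 else x ⟨(r : ℕ) - 1, by omega⟩ := by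
  unfold pmul
  simp only [Finset.sum_apply, Pi.smul_apply, smul_eq_mul]
  have hinner : ∀ i : Fin m,
      ∑ j : Fin m, x i * (⇑σ)^[(i:ℕ)] (tvec K m j) * tred ⇑σ m (acoef K m a0) ((i:ℕ)+(j:ℕ)) r
        = x i * tred ⇑σ m (acoef K m a0) ((i:ℕ)+1) r := by
    intro i
    rw [Fintype.sum_eq_single (⟨1, by omega⟩ : Fin m)]
    · simp [tvec, iterate_map_one]
    · intro b hb
      have : (b:ℕ) ≠ 1 := fun h => hb (Fin.ext h)
      simp [tvec, this, iterate_map_zero]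
  rw [Finset.sum_congr rfl fun i _ => hinner i]
  by_cases hr : (r : ℕ) = 0
  · rw [Fintype.sum_eq_single (⟨m-1, by omega⟩ : Fin m), if_pos hr]
    · rw [Fin.val_mk, Nat.sub_add_cancel (by omega),
        tred_ge' σ a0 (by omega) le_rfl (by omega)]
      simp [bvec, hr, Nat.sub_self]
    · intro b hb
      have hb' : (b:ℕ) ≠ m-1 := fun h => hb (Fin.ext h)
      rw [tred_lt (show (b:ℕ)+1 < m by omega)]
      simp only [bvec]
      have hne : ¬ ((r:ℕ) = (b:ℕ)+1) := by omega
      rw [if_neg hne]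
      simp
  · rw [Fintype.sum_eq_single (⟨(r:ℕ)-1, by omega⟩ : Fin m), if_neg hr]
    · have harg : ((⟨(r:ℕ)-1, by omega⟩ : Fin m) : ℕ) + 1 = (r:ℕ) := by
        simp only [Fin.val_mk]; omega
      rw [harg, tred_lt r.isLt]
      simp [bvec]
    · intro b hb
      have hb' : (b:ℕ) ≠ (r:ℕ)-1 := fun h => hb (Fin.ext h)
      by_cases hbm : (b:ℕ)+1 < m
      · rw [tred_lt hbm]
        simp only [bvec]
        have hne : ¬ ((r:ℕ) = (b:ℕ)+1) := by omega
        rw [if_neg hne]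
        simp
      · rw [tred_ge' σ a0 (by omega) (by omega) (by omega)]
        simp only [bvec, Pi.smul_apply, smul_eq_mul]
        have hne : ¬ ((r:ℕ) = (b:ℕ)+1-m) := by omega
        rw [if_neg hne]
        simp

lemma pmul_emv_coord (σ : K ≃ₐ[F] K) {m : ℕ} (a0 : K) (hm : 2 ≤ m) (x : Fin m → K)
    (r : Fin m) :
    pmul ⇑σ (acoef K m a0) x (bvec K m (m-1)) r
      = if h : (r : ℕ) = m - 1 then x ⟨0, by omega⟩
        else x ⟨(r : ℕ) + 1, by omega⟩ * (⇑σ)^[(r:ℕ)] a0 := by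
  unfold pmul
  simp only [Finset.sum_apply, Pi.smul_apply, smul_eq_mul]
  have hinner : ∀ i : Fin m,
      ∑ j : Fin m, x i * (⇑σ)^[(i:ℕ)] (bvec K m (m-1) j) * tred ⇑σ m (acoef K m a0) ((i:ℕ)+(j:ℕ)) r
        = x i * tred ⇑σ m (acoef K m a0) ((i:ℕ)+(m-1)) r := by
    intro i
    rw [Fintype.sum_eq_single (⟨m-1, by omega⟩ : Fin m)]
    · simp [bvec, iterate_map_one]
    · intro b hb
      have : (b:ℕ) ≠ m-1 := fun h => hb (Fin.ext h)
      simp [bvec, this, iterate_map_zero]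
  rw [Finset.sum_congr rfl fun i _ => hinner i]
  by_cases hr : (r : ℕ) = m - 1
  · rw [Fintype.sum_eq_single (⟨0, by omega⟩ : Fin m), dif_pos hr]
    · rw [Fin.val_mk, Nat.zero_add, tred_lt (by omega)]
      simp [bvec, hr]
    · intro b hb
      have hb' : (b:ℕ) ≠ 0 := fun h => hb (Fin.ext h)
      rw [tred_ge' σ a0 (by omega) (by omega) (by omega)]
      simp only [bvec, Pi.smul_apply, smul_eq_mul]
      have hne : ¬ ((r:ℕ) = (b:ℕ)+(m-1)-m) := by omega
      rw [if_neg hne]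
      simp
  · rw [Fintype.sum_eq_single (⟨(r:ℕ)+1, by omega⟩ : Fin m), dif_neg hr]
    · have harg : ((⟨(r:ℕ)+1, by omega⟩ : Fin m) : ℕ) + (m-1) = (r:ℕ) + m := by
        simp only [Fin.val_mk]; omega
      rw [harg, tred_ge' σ a0 (by omega) (by omega) (by omega)]
      have h1 : (r:ℕ) + m - m = (r:ℕ) := by omega
      rw [h1]
      simp [bvec]
    · intro b hb
      have hb' : (b:ℕ) ≠ (r:ℕ)+1 := fun h => hb (Fin.ext h)
      by_cases hb0 : (b:ℕ) = 0
      · rw [hb0, Nat.zero_add, tred_lt (by omega)]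
        simp only [bvec]
        have hne : ¬ ((r:ℕ) = m-1) := hr
        rw [if_neg hne]
        simp
      · rw [tred_ge' σ a0 (by omega) (by omega) (by omega)]
        simp only [bvec, Pi.smul_apply, smul_eq_mul]
        have hne : ¬ ((r:ℕ) = (b:ℕ)+(m-1)-m) := by omega
        rw [if_neg hne]
        simp


lemma iter_comm (σ τ : K ≃ₐ[F] K) (h : ∀ x, σ (τ x) = τ (σ x)) (i : ℕ) (x : K) :
    τ ((⇑σ)^[i] x) = (⇑σ)^[i] (τ x) := by
  induction i generalizing x with
  | zero => simp
  | succ n ih => rw [Function.iterate_succ_apply, Function.iterate_succ_apply, ih, h]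

lemma dprod_add (σ : K ≃ₐ[F] K) (k : K) (i j : ℕ) :
    (∏ l ∈ Finset.range (i+j), (⇑σ)^[l] k)
      = (∏ l ∈ Finset.range i, (⇑σ)^[l] k) * (⇑σ)^[i] (∏ l ∈ Finset.range j, (⇑σ)^[l] k) := by
  rw [Finset.prod_range_add]
  congr 1
  rw [iterpow σ i, map_prod]
  refine Finset.prod_congr rfl fun l _ => ?_
  rw [← iterpow σ i, ← Function.iterate_add_apply]

lemma Hkey (σ τ : K ≃ₐ[F] K) (k a0 : K) {m : ℕ} (hm : 2 ≤ m)
    (hco : ∀ x, σ (τ x) = τ (σ x))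
    (hcond : τ a0 = (∏ l ∈ Finset.range m, (⇑σ)^[l] k) * a0)
    (c : K) (s : ℕ) (hs : s < 2*m) :
    Hmap ⇑σ ⇑τ k (c • tred ⇑σ m (acoef K m a0) s)
      = (τ c * ∏ l ∈ Finset.range s, (⇑σ)^[l] k) • tred ⇑σ m (acoef K m a0) s := by
  have hlow : ∀ (c' : K) (s' : ℕ), s' < m →
      Hmap ⇑σ ⇑τ k (c' • bvec K m s')
        = (τ c' * ∏ l ∈ Finset.range s', (⇑σ)^[l] k) • bvec K m s' := by
    intro c' s' hs'
    funext r
    simp only [Hmap, Pi.smul_apply, smul_eq_mul, bvec]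
    by_cases h : (r : ℕ) = s'
    · rw [if_pos h, mul_one, mul_one, h]
    · rw [if_neg h, mul_zero, mul_zero, map_zero, zero_mul]
  rcases lt_or_ge s m with hsm | hsm
  · rw [tred_lt hsm]
    exact hlow c s hsm
  · rw [tred_ge' σ a0 (by omega) hsm hs]
    rw [smul_smul, hlow _ _ (by omega), smul_smul]
    congr 1
    have h1 : τ (c * (⇑σ)^[s-m] a0) = τ c * (⇑σ)^[s-m] (τ a0) := by
      rw [map_mul, iter_comm σ τ hco]
    rw [h1, hcond, iterate_map_mul]
    have h2 : (∏ l ∈ Finset.range s, (⇑σ)^[l] k)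
        = (∏ l ∈ Finset.range (s-m), (⇑σ)^[l] k)
          * (⇑σ)^[s-m] (∏ l ∈ Finset.range m, (⇑σ)^[l] k) := by
      have hsm' : s - m + m = s := by omega
      rw [← dprod_add σ k (s-m) m, hsm']
    rw [h2]
    ring


lemma prod_aut_invariant {F K : Type*} [Field F] [Field K] [Algebra F K]
    [FiniteDimensional F K] (g : K ≃ₐ[F] K) (x : K) :
    (∏ ρ : K ≃ₐ[F] K, ρ (g x)) = ∏ ρ : K ≃ₐ[F] K, ρ x := by
  rw [← Equiv.prod_comp (Equiv.mulRight g) (fun ρ : K ≃ₐ[F] K => ρ x)]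
  rfl

theorem norm_part {F K : Type*} [Field F] [Field K] [Algebra F K]
    [FiniteDimensional F K] [IsGalois F K]
    (σ : K ≃ₐ[F] K) (m : ℕ) (a0 : K) (ha0 : a0 ≠ 0)
    (τ : K ≃ₐ[F] K) (k : K)
    (hcond : τ a0 = (∏ l ∈ Finset.range m, (⇑σ)^[l] k) * a0) :
    Algebra.norm F k ^ m = 1 := by
  apply (algebraMap F K).injective
  rw [map_pow, map_one, Algebra.norm_eq_prod_automorphisms]
  have ha0p : (∏ ρ : K ≃ₐ[F] K, ρ a0) ≠ 0 :=
    Finset.prod_ne_zero_iff.mpr fun ρ _ => by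
      simpa using (map_ne_zero_iff ρ ρ.injective).mpr ha0
  have h2 : (∏ ρ : K ≃ₐ[F] K, ρ (τ a0))
      = (∏ ρ : K ≃ₐ[F] K, ρ (∏ l ∈ Finset.range m, (⇑σ)^[l] k))
        * ∏ ρ : K ≃ₐ[F] K, ρ a0 := by
    rw [← Finset.prod_mul_distrib]
    exact Finset.prod_congr rfl fun ρ _ => by rw [hcond, map_mul]
  have h3 : (∏ ρ : K ≃ₐ[F] K, ρ (∏ l ∈ Finset.range m, (⇑σ)^[l] k)) = 1 :=
    mul_right_cancel₀ ha0p (by rw [← h2, prod_aut_invariant τ a0, one_mul])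
  calc (∏ ρ : K ≃ₐ[F] K, ρ k) ^ m
      = ∏ l ∈ Finset.range m, ∏ ρ : K ≃ₐ[F] K, ρ k := by
        rw [Finset.prod_const, Finset.card_range]
    _ = ∏ l ∈ Finset.range m, ∏ ρ : K ≃ₐ[F] K, ρ ((⇑σ)^[l] k) := by
        refine Finset.prod_congr rfl fun l _ => ?_
        rw [iterpow σ l, prod_aut_invariant (σ ^ l) k]
    _ = ∏ ρ : K ≃ₐ[F] K, ∏ l ∈ Finset.range m, ρ ((⇑σ)^[l] k) := Finset.prod_comm
    _ = ∏ ρ : K ≃ₐ[F] K, ρ (∏ l ∈ Finset.range m, (⇑σ)^[l] k) := by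
        exact Finset.prod_congr rfl fun ρ _ => (map_prod ρ _ _).symm
    _ = 1 := h3


theorem hmap_aut {F K : Type*} [Field F] [Field K] [Algebra F K]
    (σ τ : K ≃ₐ[F] K) {m : ℕ} (hm : 2 ≤ m) (a0 : K)
    (hco : ∀ x, σ (τ x) = τ (σ x))
    (hτfix : ∀ c : K, σ c = c → τ c = c)
    (k : K) (hk : k ≠ 0)
    (hcond : τ a0 = (∏ l ∈ Finset.range m, (⇑σ)^[l] k) * a0) :
    IsPetitAut ⇑σ (acoef K m a0) (Hmap ⇑σ ⇑τ k) := by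
  have hdne : ∀ i : ℕ, (∏ l ∈ Finset.range i, (⇑σ)^[l] k) ≠ 0 := by
    intro i
    refine Finset.prod_ne_zero_iff.mpr fun l _ => ?_
    rw [iterpow σ l]
    exact (map_ne_zero_iff _ (σ ^ l).injective).mpr hk
  have hadd : ∀ u v : Fin m → K, Hmap ⇑σ ⇑τ k (u + v) = Hmap (⇑σ) (⇑τ) k u + Hmap (⇑σ) (⇑τ) k v := by
    intro u v
    funext i
    simp [Hmap, map_add, add_mul]
  refine ⟨?_, hadd, ?_, ?_, ?_⟩
  · refine Function.bijective_iff_has_inverse.mpr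
      ⟨fun z i => τ.symm (z i * (∏ l ∈ Finset.range (i:ℕ), (⇑σ)^[l] k)⁻¹), ?_, ?_⟩
    · intro x
      funext i
      simp only [Hmap]
      rw [mul_assoc, mul_inv_cancel₀ (hdne i), mul_one, AlgEquiv.symm_apply_apply]
    · intro z
      funext i
      simp only [Hmap]
      rw [AlgEquiv.apply_symm_apply, mul_assoc, inv_mul_cancel₀ (hdne i), mul_one]
  · intro c hc x
    have hcF : τ c = c := hτfix c hc
    funext i
    simp only [Hmap, Pi.smul_apply, smul_eq_mul, map_mul, hcF, mul_assoc]
  · intro x y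
    have hΦ : Hmap (⇑σ) (⇑τ) k = ⇑(AddMonoidHom.mk' (Hmap (⇑σ) (⇑τ) k) hadd) := rfl
    show Hmap (⇑σ) (⇑τ) k (pmul (⇑σ) (acoef K m a0) x y) = _
    unfold pmul
    rw [hΦ, map_sum]
    refine Finset.sum_congr rfl fun i _ => ?_
    rw [map_sum]
    refine Finset.sum_congr rfl fun j _ => ?_
    rw [← hΦ, Hkey σ τ k a0 hm hco hcond _ _ (by have := i.isLt; have := j.isLt; omega)]
    congr 1
    show τ (x i * (⇑σ)^[(i:ℕ)] (y j)) * _ = Hmap (⇑σ) (⇑τ) k x i * (⇑σ)^[(i:ℕ)] (Hmap (⇑σ) (⇑τ) k y j)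
    simp only [Hmap]
    rw [map_mul, iter_comm σ τ hco, dprod_add σ k (i:ℕ) (j:ℕ), iterate_map_mul]
    ring
  · funext i
    simp only [Hmap, pone]
    by_cases h : (i : ℕ) = 0
    · rw [if_pos h, map_one, h]
      simp
    · rw [if_neg h, map_zero, zero_mul]


theorem aut_to_hmap {F K : Type*} [Field F] [Field K] [Algebra F K]
    [FiniteDimensional F K]
    (σ : K ≃ₐ[F] K) (hσ : σ ≠ AlgEquiv.refl)
    (hfix : ∀ x : K, σ x = x ↔ x ∈ Set.range (algebraMap F K))
    (hcomm : ∀ (τ : K ≃ₐ[F] K) (x : K), σ (τ x) = τ (σ x))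
    (m : ℕ) (hm : 2 ≤ m) (hord : m - 1 ≤ orderOf σ)
    (a0 : K) (ha0 : a0 ∉ Set.range (algebraMap F K))
    (H : (Fin m → K) → (Fin m → K)) (hP : IsPetitAut ⇑σ (acoef K m a0) H) :
    ∃ (τ : K ≃ₐ[F] K) (k : K), k ≠ 0 ∧
      τ a0 = (∏ l ∈ Finset.range m, (⇑σ)^[l] k) * a0 ∧ H = Hmap (⇑σ) (⇑τ) k := by
  obtain ⟨hbij, hadd, hsmul, hmul, hone⟩ := hP
  have hm0 : 0 < m := by omega
  have hσa0 : σ a0 ≠ a0 := fun h => ha0 ((hfix a0).mp h)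
  have hH0 : H 0 = 0 := by
    have h := hadd 0 0
    rw [add_zero] at h
    exact left_eq_add.mp h
  -- Step B: H maps iota K into iota K
  have hemt : pmul ⇑σ (acoef K m a0) (bvec K m (m-1)) (tvec K m) = iota K m a0 := by
    have h := pmul_single σ (acoef K m a0) 1 1 (⟨m-1, by omega⟩ : Fin m) (⟨1, by omega⟩ : Fin m)
    simp only [one_smul, Fin.val_mk, one_mul, iterate_map_one] at h
    have harg : m - 1 + 1 = m := by omega
    rw [harg, tred_ge' σ a0 hm0 le_rfl (by omega), Nat.sub_self] at h
    have htv : tvec K m = bvec K m 1 := rfl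
    rw [htv, h, iota_eq]
    simp
  have hiotaH : ∀ c : K, ∀ r : Fin m, (r:ℕ) ≠ 0 → H (iota K m c) r = 0 := by
    intro c r hr
    obtain ⟨u, hu⟩ := hbij.2 (bvec K m (m-1))
    obtain ⟨v, hv⟩ := hbij.2 (tvec K m)
    have hassoc : pmul ⇑σ (acoef K m a0) (pmul ⇑σ (acoef K m a0) (iota K m c) u) v
        = pmul ⇑σ (acoef K m a0) (iota K m c) (pmul ⇑σ (acoef K m a0) u v) := by
      rw [iota_pmul σ (acoef K m a0) hm0, iota_pmul σ (acoef K m a0) hm0, smul_pmul]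
    have h2 := congrArg H hassoc
    rw [hmul, hmul, hmul, hmul, hu, hv, hemt] at h2
    have hL := congrFun h2 r
    rw [pmul_iota_coord σ (acoef K m a0) a0 (H (iota K m c)) r] at hL
    rw [pmul_tvec_coord σ a0 hm _ r, if_neg hr] at hL
    rw [pmul_emv_coord σ a0 hm _ _] at hL
    rw [dif_neg (by simp only [Fin.val_mk]; omega)] at hL
    have hidx : (⟨((⟨(r:ℕ) - 1, by omega⟩ : Fin m) : ℕ) + 1, by simp only [Fin.val_mk]; omega⟩ : Fin m) = r := by
      apply Fin.ext
      simp only [Fin.val_mk]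
      omega
    rw [hidx] at hL
    by_contra hw
    apply hσa0
    have hcan : (⇑σ)^[((⟨(r:ℕ) - 1, by omega⟩ : Fin m) : ℕ)] a0 = (⇑σ)^[(r:ℕ)] a0 :=
      mul_left_cancel₀ hw hL
    rw [Fin.val_mk] at hcan
    have hstep : (⇑σ)^[(r:ℕ)] a0 = (⇑σ)^[(r:ℕ)-1] (σ a0) := by
      conv_lhs => rw [show (r:ℕ) = ((r:ℕ)-1)+1 from by omega]
      rw [Function.iterate_succ_apply]
    rw [hstep] at hcan
    have hinj : Function.Injective ((⇑σ)^[(r:ℕ)-1]) := by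
      have := iterpow σ ((r:ℕ)-1)
      intro p q hpq
      rw [iterpow σ ((r:ℕ)-1), iterpow σ ((r:ℕ)-1)] at hpq
      exact (σ ^ ((r:ℕ)-1)).injective hpq
    exact (hinj hcan).symm

  -- τ0 and its properties
  have hiota_add : ∀ c d : K, iota K m (c + d) = iota K m c + iota K m d := by
    intro c d; funext i; by_cases h : (i:ℕ) = 0 <;> simp [iota, h]
  have hiota_mul : ∀ c d : K, pmul ⇑σ (acoef K m a0) (iota K m c) (iota K m d)
      = iota K m (c * d) := by
    intro c d
    rw [iota_pmul σ (acoef K m a0) hm0]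
    funext i; by_cases h : (i:ℕ) = 0 <;> simp [iota, h]
  have hiota_one : iota K m 1 = pone K m := rfl
  have hiota_zero : iota K m 0 = 0 := by funext i; simp [iota]
  have hiota_pone : ∀ c : K, iota K m c = c • pone K m := by
    intro c; funext i; by_cases h : (i:ℕ) = 0 <;> simp [iota, pone, h]
  set τ0 : K → K := fun c => H (iota K m c) ⟨0, hm0⟩ with hτ0def
  have hιτ : ∀ c : K, H (iota K m c) = iota K m (τ0 c) := by
    intro c; funext r
    by_cases hr : (r:ℕ) = 0
    · have : r = ⟨0, hm0⟩ := Fin.ext hr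
      rw [this]
      simp [iota, hτ0def]
    · rw [hiotaH c r hr]
      simp [iota, hr]
  have hτ1 : τ0 1 = 1 := by
    rw [hτ0def]
    show H (iota K m 1) ⟨0, hm0⟩ = 1
    rw [hiota_one, hone]
    simp [pone]
  have hτm : ∀ c d : K, τ0 (c * d) = τ0 c * τ0 d := by
    intro c d
    have h2 : H (iota K m (c*d)) = iota K m (τ0 c * τ0 d) := by
      rw [← hiota_mul c d, hmul, hιτ c, hιτ d, hiota_mul]
    have h3 := congrFun h2 (⟨0, hm0⟩ : Fin m)
    rw [hιτ (c*d)] at h3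
    simpa [iota] using h3
  have hτa : ∀ c d : K, τ0 (c + d) = τ0 c + τ0 d := by
    intro c d
    have h2 : H (iota K m (c+d)) = iota K m (τ0 c) + iota K m (τ0 d) := by
      rw [hiota_add, hadd, hιτ c, hιτ d]
    have h3 := congrFun h2 (⟨0, hm0⟩ : Fin m)
    rw [hιτ (c+d)] at h3
    simpa [iota] using h3
  have hτz : τ0 0 = 0 := by
    rw [hτ0def]
    show H (iota K m 0) ⟨0, hm0⟩ = 0
    rw [hiota_zero, hH0]
    rfl
  have hτF : ∀ s : F, τ0 (algebraMap F K s) = algebraMap F K s := by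
    intro s
    rw [hτ0def]
    show H (iota K m (algebraMap F K s)) ⟨0, hm0⟩ = algebraMap F K s
    rw [hiota_pone, hsmul _ (σ.commutes s) _, hone]
    simp [pone]
  let τh : K →ₐ[F] K :=
    { toFun := τ0
      map_one' := hτ1
      map_mul' := hτm
      map_zero' := hτz
      map_add' := hτa
      commutes' := hτF }
  have hτcoe : ⇑(AlgEquiv.ofBijective τh τh.bijective) = τ0 := rfl
  -- Step D : H(t) = k • t
  have hrel : ∀ c : K, pmul ⇑σ (acoef K m a0) (tvec K m) (iota K m c)
      = pmul ⇑σ (acoef K m a0) (iota K m (σ c)) (tvec K m) := by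
    intro c
    rw [iota_pmul σ (acoef K m a0) hm0]
    funext r
    rw [pmul_iota_coord]
    by_cases hr : (r:ℕ) = 1 <;> simp [tvec, hr]
  have hDrel : ∀ b : K, ∀ r : Fin m,
      H (tvec K m) r * (⇑σ)^[(r:ℕ)] b = σ b * H (tvec K m) r := by
    intro b r
    obtain ⟨c, hc⟩ := (AlgEquiv.ofBijective τh τh.bijective).surjective b
    rw [hτcoe] at hc
    have h2 := congrArg H (hrel c)
    rw [hmul, hmul, hιτ c, hιτ (σ c)] at h2
    have h3 := congrFun h2 r
    rw [pmul_iota_coord, iota_pmul σ (acoef K m a0) hm0] at h3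
    have hcm : τ0 (σ c) = σ (τ0 c) := by
      have h := hcomm (AlgEquiv.ofBijective τh τh.bijective) c
      rw [hτcoe] at h
      exact h.symm
    rw [hcm, hc] at h3
    simpa using h3
  have hwvanish : ∀ r : Fin m, (r:ℕ) ≠ 1 → H (tvec K m) r = 0 := by
    intro r hr
    by_contra hw
    rcases Nat.eq_zero_or_pos (r:ℕ) with hr0 | hrpos
    · apply hσ
      apply AlgEquiv.ext
      intro b
      have h := hDrel b r
      rw [hr0, Function.iterate_zero_apply] at h
      have h' : H (tvec K m) r * b = H (tvec K m) r * σ b := by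
        rw [h]; ring
      simpa using (mul_left_cancel₀ hw h').symm
    · have hr2 : 2 ≤ (r:ℕ) := by omega
      have hiter : ∀ b, (⇑σ)^[(r:ℕ)-1] b = b := by
        intro b
        have h := hDrel (σ.symm b) r
        have h4 : (⇑σ)^[(r:ℕ)] (σ.symm b) = (⇑σ)^[(r:ℕ)-1] b := by
          conv_lhs => rw [show (r:ℕ) = ((r:ℕ)-1)+1 from by omega]
          rw [Function.iterate_succ_apply, AlgEquiv.apply_symm_apply]
        rw [h4, AlgEquiv.apply_symm_apply] at h
        have h' : H (tvec K m) r * (⇑σ)^[(r:ℕ)-1] b = H (tvec K m) r * b := by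
          rw [h]; ring
        exact mul_left_cancel₀ hw h'
      have hpow : σ ^ ((r:ℕ)-1) = 1 := by
        apply AlgEquiv.ext
        intro b
        have := hiter b
        rw [iterpow σ ((r:ℕ)-1)] at this
        simpa using this
      have hdvd := orderOf_dvd_of_pow_eq_one hpow
      have hle := Nat.le_of_dvd (by omega) hdvd
      have hlt := r.isLt
      omega
  set k := H (tvec K m) ⟨1, by omega⟩ with hkdef
  have hkne : k ≠ 0 := by
    intro hk0
    have hz : H (tvec K m) = 0 := by
      funext r
      by_cases hr : (r:ℕ) = 1
      · have hre : r = ⟨1, by omega⟩ := Fin.ext hr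
        rw [hre, ← hkdef, hk0]
        rfl
      · rw [hwvanish r hr]
        rfl
    have htz : tvec K m = 0 := hbij.1 (by rw [hz, hH0])
    have := congrFun htz ⟨1, by omega⟩
    simp [tvec] at this
  have hw1 : H (tvec K m) = k • bvec K m 1 := by
    funext r
    by_cases hr : (r:ℕ) = 1
    · have hre : r = ⟨1, by omega⟩ := Fin.ext hr
      rw [hre, ← hkdef]
      simp [bvec]
    · rw [hwvanish r hr]
      simp [bvec, hr]
  -- Step E : basis images
  have htvb : tvec K m = bvec K m 1 := rfl
  have hbasis : ∀ i : ℕ, i < m →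
      H (bvec K m i) = (∏ l ∈ Finset.range i, (⇑σ)^[l] k) • bvec K m i := by
    intro i
    induction i with
    | zero =>
      intro _
      have hb0 : bvec K m 0 = pone K m := rfl
      rw [hb0, hone]
      simp
    | succ n ih =>
      intro hn
      have hn' : n < m := by omega
      have h1 : bvec K m (n+1) = pmul ⇑σ (acoef K m a0) (bvec K m n) (tvec K m) := by
        have h := pmul_single σ (acoef K m a0) 1 1 (⟨n, hn'⟩ : Fin m) (⟨1, by omega⟩ : Fin m)
        simp only [one_smul, Fin.val_mk, one_mul, iterate_map_one] at h
        rw [tred_lt (show n+1 < m from hn)] at h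
        rw [htvb, h]
      have h2 := pmul_single σ (acoef K m a0) (∏ l ∈ Finset.range n, (⇑σ)^[l] k) k
        (⟨n, hn'⟩ : Fin m) (⟨1, by omega⟩ : Fin m)
      simp only [Fin.val_mk] at h2
      conv_lhs => rw [h1]
      rw [hmul, ih hn', hw1, h2, tred_lt (show n+1 < m from hn), Finset.prod_range_succ]
  -- Step F : the compatibility condition
  have hcond : τ0 a0 = (∏ l ∈ Finset.range m, (⇑σ)^[l] k) * a0 := by
    have h2 := congrArg H hemt
    rw [hmul, hιτ a0, hbasis (m-1) (by omega), hw1] at h2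
    have h3 := pmul_single σ (acoef K m a0) (∏ l ∈ Finset.range (m-1), (⇑σ)^[l] k) k
      (⟨m-1, by omega⟩ : Fin m) (⟨1, by omega⟩ : Fin m)
    simp only [Fin.val_mk] at h3
    rw [h3, show m-1+1 = m from by omega, tred_ge' σ a0 hm0 le_rfl (by omega),
      Nat.sub_self] at h2
    have h4 := congrFun h2 (⟨0, hm0⟩ : Fin m)
    simp only [Pi.smul_apply, smul_eq_mul, bvec, iota, Fin.val_mk,
      Function.iterate_zero_apply, eq_self_iff_true, if_true, mul_one] at h4
    have h5 : (∏ l ∈ Finset.range m, (⇑σ)^[l] k)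
        = (∏ l ∈ Finset.range (m-1), (⇑σ)^[l] k) * (⇑σ)^[m-1] k := by
      conv_lhs => rw [show m = (m-1)+1 from by omega]
      rw [Finset.prod_range_succ]
    rw [h5, ← h4]
  -- Step G : H = Hmap
  refine ⟨AlgEquiv.ofBijective τh τh.bijective, k, hkne, by rw [hτcoe]; exact hcond, ?_⟩
  funext x
  have hΦ : H = ⇑(AddMonoidHom.mk' H hadd) := rfl
  have hxe : x = ∑ i : Fin m, x i • bvec K m (i:ℕ) := (bvec_expand x).symm
  calc H x = ∑ i : Fin m, H (x i • bvec K m (i:ℕ)) := by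
        conv_lhs => rw [hxe, hΦ]
        rw [map_sum]
        rfl
    _ = ∑ i : Fin m, (τ0 (x i) * ∏ l ∈ Finset.range (i:ℕ), (⇑σ)^[l] k) • bvec K m (i:ℕ) := by
        refine Finset.sum_congr rfl fun i _ => ?_
        have h1 : x i • bvec K m (i:ℕ)
            = pmul ⇑σ (acoef K m a0) (iota K m (x i)) (bvec K m (i:ℕ)) :=
          (iota_pmul σ (acoef K m a0) hm0 (x i) (bvec K m (i:ℕ))).symm
        rw [h1, hmul, hιτ (x i), hbasis (i:ℕ) i.isLt,
          iota_pmul σ (acoef K m a0) hm0, smul_smul]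
    _ = Hmap (⇑σ) (⇑(AlgEquiv.ofBijective τh τh.bijective)) k x := by
        funext r
        rw [Finset.sum_apply, Fintype.sum_eq_single r]
        · show (τ0 (x r) * ∏ l ∈ Finset.range (r:ℕ), (⇑σ)^[l] k) * bvec K m (r:ℕ) r
            = τ0 (x r) * ∏ l ∈ Finset.range (r:ℕ), (⇑σ)^[l] k
          simp [bvec]
        · intro b hb
          have hne : (r:ℕ) ≠ (b:ℕ) := fun h => hb (Fin.ext h.symm)
          show (τ0 (x b) * ∏ l ∈ Finset.range (b:ℕ), (⇑σ)^[l] k) * bvec K m (b:ℕ) r = 0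
          simp [bvec, hne]


end aux


/-- **Corollary 3.5.** Let `K/F` be finite Galois with norm `N_{K/F}`, `σ ∈ Gal(K/F)`
of order `n ≥ m − 1` with `Fix(σ) = F`, commuting with every `τ ∈ Gal(K/F)`, and let
`f(t) = t^m − a₀` with `a₀ ∈ K∖F`.  Then `H ∈ Aut_F(S_f)` iff `H = H_{τ,k}` for some
`τ ∈ Gal(K/F)` and `k ∈ K^×` with `τ(a₀) = (Π_{l=0}^{m−1} σ^l(k))·a₀`; for any such
`k`, `N_{K/F}(k)` is an `m`-th root of unity. -/
theorem stmt11 {F K : Type*} [Field F] [Field K] [Algebra F K]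
    [FiniteDimensional F K] [IsGalois F K]
    (σ : K ≃ₐ[F] K) (hσ : σ ≠ AlgEquiv.refl)
    (hfix : ∀ x : K, σ x = x ↔ x ∈ Set.range (algebraMap F K))
    (hcomm : ∀ (τ : K ≃ₐ[F] K) (x : K), σ (τ x) = τ (σ x))
    (m : ℕ) (hm : 2 ≤ m) (hord : m - 1 ≤ orderOf σ)
    (a0 : K) (ha0 : a0 ∉ Set.range (algebraMap F K)) :
    (∀ H : (Fin m → K) → (Fin m → K),
      IsPetitAut (⇑σ) (fun i : Fin m => if (i : ℕ) = 0 then a0 else 0) H ↔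
        ∃ (τ : K ≃ₐ[F] K) (k : K), k ≠ 0 ∧
          τ a0 = (∏ l ∈ Finset.range m, (⇑σ)^[l] k) * a0 ∧ H = Hmap (⇑σ) (⇑τ) k)
    ∧ (∀ (τ : K ≃ₐ[F] K) (k : K), k ≠ 0 →
        τ a0 = (∏ l ∈ Finset.range m, (⇑σ)^[l] k) * a0 → Algebra.norm F k ^ m = 1) := by
  have hAa : (fun i : Fin m => if (i : ℕ) = 0 then a0 else 0) = acoef K m a0 := rfl
  rw [hAa]
  have ha0ne : a0 ≠ 0 := fun h => ha0 ⟨0, by rw [map_zero, h]⟩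
  constructor
  · intro H
    constructor
    · intro hP
      exact aut_to_hmap σ hσ hfix hcomm m hm hord a0 ha0 H hP
    · rintro ⟨τ, k, hk, hcond, rfl⟩
      refine hmap_aut σ τ hm a0 (hcomm τ) (fun c hc => ?_) k hk hcond
      obtain ⟨s, hs⟩ := (hfix c).mp hc
      rw [← hs, AlgEquiv.commutes]
  · intro τ k hk hcond
    exact norm_part σ m a0 ha0ne τ k hcond
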